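/- Let α ∈ (0,1), z₀ ∈ (0,1), z_{i+1} = (1-α) z_i, and let F : [0,1] → [0,1) on [0,1) satisfy F(0)=0 and have a finite derivative at 0. Then for any integer k ≥ 2, the infinite product ∏_{i=0}^∞ (1 - F(z_i^{k-1}))^k converges to a strictly positive limit. -/

import Mathlib

open Filter Real Asymptotics

theorem infinite_product_positive
    (α : ℝ) (hα : α ∈ Set.Ioo (0:ℝ) 1)
    (z₀ : ℝ) (hz₀ : z₀ ∈ Set.Ioo (0:ℝ) 1)
    (z : ℕ → ℝ) (hz0 : z 0 = z₀) (hzrec : ∀ i, z (i + 1) = (1 - α) * z i)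
    (F : ℝ → ℝ) (hFmap : ∀ x ∈ Set.Ico (0:ℝ) 1, F x ∈ Set.Ico (0:ℝ) 1)
    (hF0 : F 0 = 0) (c : ℝ) (hFderiv : HasDerivAt F c 0)
    (k : ℕ) (hk : 2 ≤ k) :
    ∃ L : ℝ, 0 < L ∧
      Filter.Tendsto (fun n => ∏ i ∈ Finset.range n, (1 - F ((z i) ^ (k - 1))) ^ k)
        Filter.atTop (nhds L) := by
  obtain ⟨hα0, hα1⟩ := hα
  obtain ⟨hz₀0, hz₀1⟩ := hz₀
  set β := 1 - α with hβ
  have hβ0 : 0 < β := by linarith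
  have hβ1 : β < 1 := by linarith
  -- closed form for z
  have hzi : ∀ i, z i = z₀ * β ^ i := by
    intro i
    induction i with
    | zero => simp [hz0]
    | succ n ih => rw [hzrec, ih]; ring
  have hzpos : ∀ i, 0 < z i := fun i => by
    rw [hzi]; positivity
  have hzlt : ∀ i, z i < 1 := fun i => by
    rw [hzi]
    calc z₀ * β ^ i ≤ z₀ * 1 := by
          apply mul_le_mul_of_nonneg_left _ hz₀0.le
          exact pow_le_one₀ hβ0.le hβ1.le
      _ < 1 := by linarith
  set m := k - 1 with hm
  set a : ℕ → ℝ := fun i => F ((z i) ^ m) with ha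
  have hmem : ∀ i, (z i) ^ m ∈ Set.Ico (0:ℝ) 1 := fun i =>
    ⟨pow_nonneg (hzpos i).le _, pow_lt_one₀ (hzpos i).le (hzlt i) (by omega)⟩
  have haIco : ∀ i, a i ∈ Set.Ico (0:ℝ) 1 := fun i => hFmap _ (hmem i)
  -- z i ^ m tends to 0
  have hzm : Tendsto (fun i => (z i) ^ m) atTop (nhds 0) := by
    have : Tendsto (fun i : ℕ => z₀ ^ m * (β ^ m) ^ i) atTop (nhds 0) := by
      have h1 : |β ^ m| < 1 := by
        rw [abs_of_nonneg (by positivity)]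
        exact pow_lt_one₀ hβ0.le hβ1 (by omega)
      simpa using (tendsto_pow_atTop_nhds_zero_of_abs_lt_one h1).const_mul (z₀ ^ m)
    refine this.congr fun i => ?_
    rw [hzi]; rw [mul_pow, ← pow_mul, ← pow_mul, Nat.mul_comm]
  -- F is big-O of id near 0
  have hFbigO : F =O[nhds 0] id := by
    have h := hFderiv.isBigO_sub
    simpa [hF0, Function.id_def] using h
  -- summability of a
  have hgeom : Summable (fun i : ℕ => (z i) ^ m) := by
    have h0 : Summable (fun i : ℕ => z₀ ^ m * (β ^ m) ^ i) := by
      apply Summable.mul_left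
      exact summable_geometric_of_lt_one (by positivity)
        (pow_lt_one₀ hβ0.le hβ1 (by omega))
    refine h0.congr fun i => ?_
    rw [hzi i]; ring
  have haS : Summable a := by
    apply summable_of_isBigO_nat hgeom
    exact hFbigO.comp_tendsto hzm
  -- summability of logs
  have haz : Tendsto a atTop (nhds 0) := haS.tendsto_atTop_zero
  have hlogS : Summable (fun i => Real.log (1 - a i)) := by
    apply summable_of_isBigO_nat haS
    rw [isBigO_iff]
    refine ⟨2, ?_⟩
    have hev : ∀ᶠ i in atTop, a i ≤ 1/2 :=
      haz.eventually_le_const (by norm_num)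
    filter_upwards [hev] with i hi
    have h0 : (0:ℝ) ≤ a i := (haIco i).1
    have h1 : 0 < 1 - a i := by linarith
    have hlogle : -Real.log (1 - a i) ≤ a i / (1 - a i) := by
      have := Real.log_le_sub_one_of_pos (x := (1 - a i)⁻¹) (by positivity)
      rw [Real.log_inv] at this
      have : -Real.log (1 - a i) ≤ (1 - a i)⁻¹ - 1 := this
      calc -Real.log (1 - a i) ≤ (1 - a i)⁻¹ - 1 := this
        _ = a i / (1 - a i) := by field_simp; ring
    have hlogneg : Real.log (1 - a i) ≤ 0 :=
      Real.log_nonpos (by linarith) (by linarith)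
    rw [Real.norm_eq_abs, Real.norm_eq_abs, abs_of_nonpos hlogneg, abs_of_nonneg h0]
    calc -Real.log (1 - a i) ≤ a i / (1 - a i) := hlogle
      _ ≤ a i / (1/2) := by
          apply div_le_div_of_nonneg_left h0 (by norm_num) (by linarith)
      _ = 2 * a i := by ring
  set g : ℕ → ℝ := fun i => (k : ℝ) * Real.log (1 - a i) with hg
  have hgS : Summable g := hlogS.mul_left _
  refine ⟨Real.exp (∑' i, g i), Real.exp_pos _, ?_⟩
  have hsum : Tendsto (fun n => ∑ i ∈ Finset.range n, g i) atTop (nhds (∑' i, g i)) :=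
    hgS.hasSum.tendsto_sum_nat
  have := hsum.rexp
  refine this.congr fun n => ?_
  rw [Real.exp_sum]
  apply Finset.prod_congr rfl
  intro i _
  have h1 : 0 < 1 - a i := by have := (haIco i).2; linarith
  rw [hg]
  simp only
  rw [Real.exp_nat_mul, Real.exp_log h1]
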